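/- Let R be a commutative noetherian ring, A a finite R-algebra that is projective as an R-module, and ω := Hom_R(A,R). Then Ext^i_A(ω, ω) = 0 for all i ≥ 1, where Ext is computed in the category of left A-modules; similarly Ext^i(ω, ω) = 0 for all i ≥ 1 in the category of right A-modules. -/

import Mathlib

open CategoryTheory TensorProduct

noncomputable section

variable (R : Type) [CommRing R] (A : Type) [Ring A] [Algebra R A]

/-- The dualising bimodule `ω = Hom_R(A, R)` regarded as a left `A`-module,
with action `(a • f) x = f (x * a)`. -/
def OmegaLeft := A →ₗ[R] R

instance : AddCommGroup (OmegaLeft R A) := inferInstanceAs (AddCommGroup (A →ₗ[R] R))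

instance : FunLike (OmegaLeft R A) A R := inferInstanceAs (FunLike (A →ₗ[R] R) A R)

instance : LinearMapClass (OmegaLeft R A) R A R :=
  inferInstanceAs (LinearMapClass (A →ₗ[R] R) R A R)

instance : Module A (OmegaLeft R A) where
  smul a f := ((f : A →ₗ[R] R).comp (LinearMap.mulRight R a) : A →ₗ[R] R)
  one_smul f := DFunLike.ext _ _ fun x => by
    show ((f : A →ₗ[R] R).comp (LinearMap.mulRight R (1:A))) x = f x
    simp
    rfl
  mul_smul a b f := DFunLike.ext _ _ fun x => by
    show (f : A →ₗ[R] R) (x * (a * b)) = (f : A →ₗ[R] R) ((x * a) * b)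
    rw [mul_assoc]
  smul_zero a := DFunLike.ext _ _ fun x => rfl
  smul_add a f g := DFunLike.ext _ _ fun x => rfl
  add_smul a b f := DFunLike.ext _ _ fun x => by
    show (f : A →ₗ[R] R) (x * (a + b)) = (f : A →ₗ[R] R) (x * a) + (f : A →ₗ[R] R) (x * b)
    rw [mul_add, map_add]
  zero_smul f := DFunLike.ext _ _ fun x => by
    show (f : A →ₗ[R] R) (x * 0) = 0
    rw [mul_zero, map_zero]

@[simp] lemma OmegaLeft.smul_apply (a : A) (f : OmegaLeft R A) (x : A) :
    (a • f) x = f (x * a) := rfl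

/-- The dualising bimodule `ω = Hom_R(A, R)` regarded as a right `A`-module
(i.e. a left `Aᵐᵒᵖ`-module), with action `(f • b) x = f (b * x)`. -/
def OmegaRight := A →ₗ[R] R

instance : AddCommGroup (OmegaRight R A) := inferInstanceAs (AddCommGroup (A →ₗ[R] R))

instance : FunLike (OmegaRight R A) A R := inferInstanceAs (FunLike (A →ₗ[R] R) A R)

instance : LinearMapClass (OmegaRight R A) R A R :=
  inferInstanceAs (LinearMapClass (A →ₗ[R] R) R A R)

instance : Module Aᵐᵒᵖ (OmegaRight R A) where
  smul b f := ((f : A →ₗ[R] R).comp (LinearMap.mulLeft R b.unop) : A →ₗ[R] R)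
  one_smul f := DFunLike.ext _ _ fun x => by
    show (f : A →ₗ[R] R) ((1:A) * x) = f x
    rw [one_mul]
  mul_smul a b f := DFunLike.ext _ _ fun x => by
    show (f : A →ₗ[R] R) ((b.unop * a.unop) * x) = (f : A →ₗ[R] R) (b.unop * (a.unop * x))
    rw [mul_assoc]
  smul_zero a := DFunLike.ext _ _ fun x => rfl
  smul_add a f g := DFunLike.ext _ _ fun x => rfl
  add_smul a b f := DFunLike.ext _ _ fun x => by
    show (f : A →ₗ[R] R) ((a.unop + b.unop) * x)
        = (f : A →ₗ[R] R) (a.unop * x) + (f : A →ₗ[R] R) (b.unop * x)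
    rw [add_mul, map_add]
  zero_smul f := DFunLike.ext _ _ fun x => by
    show (f : A →ₗ[R] R) (0 * x) = 0
    rw [zero_mul, map_zero]

@[simp] lemma OmegaRight.smul_apply (b : Aᵐᵒᵖ) (f : OmegaRight R A) (x : A) :
    (b • f) x = f (b.unop * x) := rfl


/-- The Ext group `Ext^n_B(M, N)` in the category of left `B`-modules. -/
def extGrp (B : Type) [Ring B] (M N : ModuleCat.{0} B) (n : ℕ) : ModuleCat ℤ :=
  ((Ext ℤ (ModuleCat.{0} B) n).obj (Opposite.op M)).obj N

namespace ExtVanishingAux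

open LinearMap

section RHelpers

variable {R : Type} [CommRing R]

theorem proj_ker {M P : Type} [AddCommGroup M] [AddCommGroup P] [Module R M] [Module R P]
    (q : M →ₗ[R] P) (hq : Function.Surjective q)
    (hM : Module.Projective R M) (hP : Module.Projective R P) :
    Module.Projective R (LinearMap.ker q) := by
  haveI := hM; haveI := hP
  obtain ⟨s, hs⟩ := Module.projective_lifting_property q LinearMap.id hq
  have hmem : ∀ x : M, x - s (q x) ∈ LinearMap.ker q := by
    intro x
    have h1 : q (s (q x)) = q x := LinearMap.congr_fun hs (q x)
    simp [LinearMap.mem_ker, map_sub, h1]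
  refine Module.Projective.of_split (LinearMap.ker q).subtype
    (LinearMap.codRestrict _ (LinearMap.id - s ∘ₗ q) hmem) ?_
  refine LinearMap.ext fun x => Subtype.ext ?_
  obtain ⟨x, hx⟩ := x
  show x - s (q x) = x
  rw [LinearMap.mem_ker.mp hx, map_zero, sub_zero]

theorem proj_range {M₂ M₁ M₀ : Type} [AddCommGroup M₂] [AddCommGroup M₁] [AddCommGroup M₀]
    [Module R M₂] [Module R M₁] [Module R M₀]
    (b : M₂ →ₗ[R] M₁) (c : M₁ →ₗ[R] M₀) (hbc : Function.Exact b c)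
    (h₁ : Module.Projective R M₁) (hc : Module.Projective R (LinearMap.range c)) :
    Module.Projective R (LinearMap.range b) := by
  have hk := proj_ker c.rangeRestrict (LinearMap.surjective_rangeRestrict c) h₁ hc
  haveI := hk
  have he : LinearMap.ker c.rangeRestrict = LinearMap.range b := by
    rw [LinearMap.ker_rangeRestrict, LinearMap.exact_iff.mp hbc]
  exact Module.Projective.of_equiv (LinearEquiv.ofEq _ _ he)

theorem factor_thru {M₃ M₂ M₁ M₀ N : Type} [AddCommGroup M₃] [AddCommGroup M₂]
    [AddCommGroup M₁] [AddCommGroup M₀] [AddCommGroup N]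
    [Module R M₃] [Module R M₂] [Module R M₁] [Module R M₀] [Module R N]
    (a : M₃ →ₗ[R] M₂) (b : M₂ →ₗ[R] M₁) (c : M₁ →ₗ[R] M₀)
    (hab : Function.Exact a b) (hbc : Function.Exact b c)
    (hb : Module.Projective R (LinearMap.range b))
    (hc : Module.Projective R (LinearMap.range c))
    (φ : M₂ →ₗ[R] N) (hφ : φ ∘ₗ a = 0) :
    ∃ ψ : M₁ →ₗ[R] N, ψ ∘ₗ b = φ := by
  haveI := hb; haveI := hc
  obtain ⟨s, hs⟩ := Module.projective_lifting_property b.rangeRestrict LinearMap.id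
    (LinearMap.surjective_rangeRestrict b)
  obtain ⟨t, ht⟩ := Module.projective_lifting_property c.rangeRestrict LinearMap.id
    (LinearMap.surjective_rangeRestrict c)
  have hct : ∀ y : LinearMap.range c, c (t y) = (y : M₀) := fun y =>
    congrArg Subtype.val (LinearMap.congr_fun ht y)
  have hmem : ∀ x : M₁, x - t (c.rangeRestrict x) ∈ LinearMap.range b := by
    intro x
    rw [← LinearMap.exact_iff.mp hbc, LinearMap.mem_ker, map_sub, hct]
    exact sub_self _
  refine ⟨φ ∘ₗ s ∘ₗ LinearMap.codRestrict _ (LinearMap.id - t ∘ₗ c.rangeRestrict) hmem,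
    LinearMap.ext fun x => ?_⟩
  have h1 : (LinearMap.codRestrict _ (LinearMap.id - t ∘ₗ c.rangeRestrict) hmem) (b x)
      = b.rangeRestrict x := by
    apply Subtype.ext
    show b x - t (c.rangeRestrict (b x)) = b x
    have h0 : c.rangeRestrict (b x) = 0 := Subtype.ext (hbc.apply_apply_eq_zero x)
    rw [h0, map_zero, sub_zero]
  have h2 : b (s (b.rangeRestrict x)) = b x :=
    congrArg Subtype.val (LinearMap.congr_fun hs (b.rangeRestrict x))
  obtain ⟨z, hz⟩ := (hab (s (b.rangeRestrict x) - x)).mp (by rw [map_sub, h2, sub_self])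
  show φ (s ((LinearMap.codRestrict _ (LinearMap.id - t ∘ₗ c.rangeRestrict) hmem) (b x))) = φ x
  rw [h1]
  have hφz : φ (a z) = 0 := LinearMap.congr_fun hφ z
  calc φ (s (b.rangeRestrict x))
      = φ ((s (b.rangeRestrict x) - x) + x) := by rw [sub_add_cancel]
    _ = φ (s (b.rangeRestrict x) - x) + φ x := map_add _ _ _
    _ = φ (a z) + φ x := by rw [hz]
    _ = φ x := by rw [hφz, zero_add]

theorem proj_trans {B M : Type} [Ring B] [Algebra R B] [AddCommGroup M] [Module B M]
    [Module R M] [IsScalarTower R B M]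
    (hB : Module.Projective R B) (hM : Module.Projective B M) :
    Module.Projective R M := by
  classical
  haveI := hB
  obtain ⟨s, hs⟩ := Module.projective_def'.mp hM
  haveI : Module.Projective R (M →₀ B) :=
    Module.Projective.of_equiv (finsuppLequivDFinsupp (R := R) (M := B) (ι := M)).symm
  exact Module.Projective.of_split (s.restrictScalars R)
    ((Finsupp.linearCombination B id).restrictScalars R)
    (LinearMap.ext fun x => LinearMap.congr_fun hs x)

end RHelpers

section Dual

variable {R B : Type} [CommRing R] [Ring B] [Algebra R B]
variable {M : Type} [AddCommGroup M] [Module B M] [Module R M] [IsScalarTower R B M]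

/-- The adjunction `Hom_B(M, Hom_R(B,R)) ≃ Hom_R(M, R)`, forward direction. -/
def toDual (φ : M →ₗ[B] OmegaLeft R B) : M →ₗ[R] R where
  toFun m := φ m 1
  map_add' x y := by
    show φ (x + y) 1 = φ x 1 + φ y 1
    rw [map_add]; rfl
  map_smul' r m := by
    show φ (r • m) 1 = r • φ m 1
    have h1 : φ (r • m) = (algebraMap R B r) • φ m := by
      rw [← algebraMap_smul B r m, map_smul]
    rw [h1]
    show φ m (1 * algebraMap R B r) = r • φ m 1
    rw [one_mul, Algebra.algebraMap_eq_smul_one, map_smul]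

/-- The adjunction, backward direction. -/
def ofDual (ψ : M →ₗ[R] R) : M →ₗ[B] OmegaLeft R B where
  toFun m := (({ toFun := fun b => ψ (b • m)
                 map_add' := fun b b' => by
                   show ψ ((b + b') • m) = ψ (b • m) + ψ (b' • m)
                   rw [add_smul, map_add]
                 map_smul' := fun r b => by
                   show ψ ((r • b) • m) = r • ψ (b • m)
                   rw [smul_assoc, map_smul] } : B →ₗ[R] R) :
    OmegaLeft R B)
  map_add' m m' := DFunLike.ext _ _ fun b => by
    show ψ (b • (m + m')) = ψ (b • m) + ψ (b • m')
    rw [smul_add, map_add]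
  map_smul' a m := DFunLike.ext _ _ fun b => by
    show ψ (b • a • m) = ψ ((b * a) • m)
    rw [mul_smul]

lemma toDual_apply (φ : M →ₗ[B] OmegaLeft R B) (m : M) : toDual φ m = φ m 1 := rfl

lemma ofDual_apply (ψ : M →ₗ[R] R) (m : M) (b : B) : ofDual ψ m b = ψ (b • m) := rfl

lemma ofDual_toDual (φ : M →ₗ[B] OmegaLeft R B) : ofDual (toDual φ) = φ := by
  refine LinearMap.ext fun m => DFunLike.ext _ _ fun b => ?_
  show φ (b • m) 1 = φ m b
  rw [map_smul]
  show φ m (1 * b) = φ m b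
  rw [one_mul]

end Dual

section Omega

theorem proj_omega (R B : Type) [CommRing R] [Ring B] [Algebra R B]
    [Module.Finite R B] [Module.Projective R B]
    {M : Type} [AddCommGroup M] [Module B M] [Module R M] [IsScalarTower R B M]
    (e : M ≃ₗ[B] OmegaLeft R B) : Module.Projective R M := by
  letI : Module R (OmegaLeft R B) := inferInstanceAs (Module R (B →ₗ[R] R))
  haveI : IsScalarTower R B (OmegaLeft R B) := ⟨fun r a f => DFunLike.ext _ _ fun x => by
    show (f : B →ₗ[R] R) (x * (r • a)) = r • (f : B →ₗ[R] R) (x * a)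
    rw [mul_smul_comm, map_smul]⟩
  haveI : Module.Projective R (OmegaLeft R B) :=
    inferInstanceAs (Module.Projective R (Module.Dual R B))
  exact Module.Projective.of_equiv (e.restrictScalars R).symm

end Omega

section Main

theorem subsingleton_of_isZero {S : Type} [Ring S] {M : ModuleCat.{0} S}
    (h : CategoryTheory.Limits.IsZero M) : Subsingleton M := by
  have h0 : (𝟙 M : M ⟶ M) = 0 := h.eq_of_src _ _
  exact ⟨fun x y => by
    have h1 := congrArg (fun g : M ⟶ M => g.hom x) h0
    have h2 := congrArg (fun g : M ⟶ M => g.hom y) h0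
    simp at h1 h2
    rw [h1, h2]⟩

/-- The underlying equivalence of types of an isomorphism in `ModuleCat S`. -/
def modIsoEquiv {S : Type} [Ring S] {M N : ModuleCat.{0} S} (e : M ≅ N) : M ≃ N :=
  ⟨e.hom, e.inv, fun x => by simp,
    fun x => by simp⟩

theorem extOmegaLeft (R B : Type) [CommRing R] [Ring B] [Algebra R B]
    [Module.Finite R B] [Module.Projective R B] (i : ℕ) (hi : 1 ≤ i) :
    Subsingleton (extGrp B (ModuleCat.of B (OmegaLeft R B))
      (ModuleCat.of B (OmegaLeft R B)) i) := by
  obtain ⟨m, rfl⟩ : ∃ m, i = m + 1 := ⟨i - 1, (Nat.succ_pred_eq_of_pos hi).symm⟩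
  set Ω : ModuleCat.{0} B := ModuleCat.of B (OmegaLeft R B) with hΩdef
  obtain ⟨P⟩ := HasProjectiveResolution.out (Z := Ω)
  suffices h : (P.complex.linearYonedaObj ℤ Ω).ExactAt (m + 1) by
    have hz := (HomologicalComplex.exactAt_iff_isZero_homology _ _).mp h
    haveI hsub : Subsingleton ((P.complex.linearYonedaObj ℤ Ω).homology (m + 1)) :=
      subsingleton_of_isZero hz
    exact Equiv.subsingleton (modIsoEquiv (P.isoExt (R := ℤ) (m + 1) Ω))
  -- scalar restriction instances
  letI instR : ∀ (N : ModuleCat.{0} B), Module R N := fun N =>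
    Module.compHom N (algebraMap R B)
  haveI instT : ∀ (N : ModuleCat.{0} B), IsScalarTower R B N := fun N =>
    ⟨fun r b x => by
      show (r • b) • x = (algebraMap R B r) • (b • x)
      rw [Algebra.smul_def, mul_smul]⟩
  have hXproj : ∀ n, Module.Projective R (P.complex.X n) := fun n =>
    proj_trans (inferInstance : Module.Projective R B)
      ((IsProjective.iff_projective (R := B) (P.complex.X n)).mpr (P.projective n))
  -- the augmentation
  let p0 : P.complex.X 0 ⟶ Ω := P.π.f 0
  have hp0surj : Function.Surjective p0 :=
    (ModuleCat.epi_iff_surjective (P.π.f 0)).mp inferInstance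
  have hex0 : Function.Exact ⇑(P.complex.d 1 0) ⇑p0 := by
    have hS : (ShortComplex.mk (P.complex.d 1 0) p0 P.complex_d_comp_π_f_zero).Exact :=
      ShortComplex.exact_of_g_is_cokernel _ P.isColimitCokernelCofork
    exact LinearMap.exact_iff.mpr hS.moduleCat_range_eq_ker.symm
  have hexS : ∀ n : ℕ, Function.Exact ⇑(P.complex.d (n+2) (n+1)) ⇑(P.complex.d (n+1) n) :=
    fun n => LinearMap.exact_iff.mpr (P.exact_succ n).moduleCat_range_eq_ker.symm
  -- R-linear versions
  let dR : ∀ n : ℕ, (P.complex.X (n+1) →ₗ[R] P.complex.X n) :=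
    fun n => (P.complex.d (n+1) n).hom.restrictScalars R
  let p0R : P.complex.X 0 →ₗ[R] Ω := p0.hom.restrictScalars R
  have hex0R : Function.Exact ⇑(dR 0) ⇑p0R := hex0
  have hexSR : ∀ n : ℕ, Function.Exact ⇑(dR (n+1)) ⇑(dR n) := fun n => hexS n
  have hΩproj : Module.Projective R Ω :=
    proj_omega R B (M := Ω) (LinearEquiv.refl B (OmegaLeft R B))
  have hp0R : Module.Projective R (LinearMap.range p0R) := by
    have htop : LinearMap.range p0R = ⊤ := LinearMap.range_eq_top.mpr hp0surj
    haveI := hΩproj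
    exact Module.Projective.of_equiv
      ((Submodule.topEquiv.symm).trans (LinearEquiv.ofEq _ _ htop.symm))
  have hrange : ∀ n, Module.Projective R (LinearMap.range (dR n)) := by
    intro n; induction n with
    | zero => exact proj_range (dR 0) p0R hex0R (hXproj 0) hp0R
    | succ k ih => exact proj_range (dR (k+1)) (dR k) (hexSR k) (hXproj (k+1)) ih
  -- exactness of the Hom complex
  rw [(P.complex.linearYonedaObj ℤ Ω).exactAt_iff' m (m+1) (m+2)
    (CochainComplex.prev_nat_succ m) (CochainComplex.next ℕ (m+1))]
  rw [ShortComplex.moduleCat_exact_iff]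
  intro φ hφ
  have hφc : P.complex.d (m+2) (m+1) ≫ φ = 0 := by
    exact hφ
  let φ' : P.complex.X (m+1) →ₗ[B] OmegaLeft R B := ModuleCat.Hom.hom (φ : P.complex.X (m+1) ⟶ Ω)
  have hφe : ∀ x : P.complex.X (m+2), φ' (P.complex.d (m+2) (m+1) x) = 0 := fun x =>
    congrArg (fun g : P.complex.X (m+2) ⟶ Ω => g x) hφc
  have hφ' : toDual φ' ∘ₗ dR (m+1) = 0 := LinearMap.ext fun x => by
    show φ' (P.complex.d (m+2) (m+1) x) 1 = 0
    rw [hφe x]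
    rfl
  obtain ⟨ψ, hψ⟩ : ∃ ψ : P.complex.X m →ₗ[R] R, ψ ∘ₗ dR m = toDual φ' := by
    rcases m with _ | k
    · exact factor_thru (dR 1) (dR 0) p0R (hexSR 0) hex0R (hrange 0) hp0R _ hφ'
    · exact factor_thru (dR (k+2)) (dR (k+1)) (dR k) (hexSR (k+1)) (hexSR k)
        (hrange (k+1)) (hrange k) _ hφ'
  let dm : P.complex.X (m+1) →ₗ[B] P.complex.X m := (P.complex.d (m+1) m).hom
  let χ : P.complex.X m →ₗ[B] OmegaLeft R B := ofDual ψ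
  have hχ : ∀ x : P.complex.X (m+1), χ (dm x) = φ' x := by
    intro x
    refine DFunLike.ext _ _ fun b => ?_
    show ψ (b • dm x) = φ' x b
    rw [← map_smul dm b x]
    rw [show ψ (dm (b • x)) = toDual φ' (b • x) from LinearMap.congr_fun hψ (b • x)]
    show φ' (b • x) 1 = φ' x b
    rw [map_smul]
    show φ' x (1 * b) = φ' x b
    rw [one_mul]
  have hfin : χ ∘ₗ dm = φ' := LinearMap.ext hχ
  refine ⟨(ModuleCat.ofHom χ : P.complex.X m ⟶ Ω), ?_⟩
  have hfin' : P.complex.d (m+1) m ≫ (ModuleCat.ofHom χ : P.complex.X m ⟶ Ω) = φ :=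
    ModuleCat.hom_ext hfin
  exact hfin'

end Main

/-- `OmegaRight R A` is, as an `Aᵐᵒᵖ`-module, isomorphic to `OmegaLeft R Aᵐᵒᵖ`. -/
def omegaRightEquiv (R A : Type) [CommRing R] [Ring A] [Algebra R A] :
    OmegaRight R A ≃ₗ[Aᵐᵒᵖ] OmegaLeft R Aᵐᵒᵖ where
  toFun f := (((f : A →ₗ[R] R) ∘ₗ
    ((MulOpposite.opLinearEquiv R (M := A)).symm : Aᵐᵒᵖ →ₗ[R] A) : Aᵐᵒᵖ →ₗ[R] R) :
      OmegaLeft R Aᵐᵒᵖ)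
  map_add' f g := DFunLike.ext _ _ fun y => rfl
  map_smul' b f := DFunLike.ext _ _ fun y => by
    show f (b.unop * y.unop) = f ((y * b).unop)
    rw [MulOpposite.unop_mul]
  invFun g := (((g : Aᵐᵒᵖ →ₗ[R] R) ∘ₗ
    ((MulOpposite.opLinearEquiv R (M := A)) : A →ₗ[R] Aᵐᵒᵖ) : A →ₗ[R] R) : OmegaRight R A)
  left_inv f := DFunLike.ext _ _ fun x => rfl
  right_inv g := DFunLike.ext _ _ fun y => rfl

end ExtVanishingAux


theorem ext_omega_omega_eq_zero
    (R : Type) [CommRing R] [IsNoetherianRing R]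
    (A : Type) [Ring A] [Algebra R A] [Module.Finite R A] [Module.Projective R A] :
    (∀ i : ℕ, 1 ≤ i →
      Subsingleton (extGrp A (ModuleCat.of A (OmegaLeft R A))
        (ModuleCat.of A (OmegaLeft R A)) i)) ∧
    (∀ i : ℕ, 1 ≤ i →
      Subsingleton (extGrp Aᵐᵒᵖ (ModuleCat.of Aᵐᵒᵖ (OmegaRight R A))
        (ModuleCat.of Aᵐᵒᵖ (OmegaRight R A)) i)) := by
  constructor
  · intro i hi
    exact ExtVanishingAux.extOmegaLeft R A i hi
  · intro i hi
    haveI : Module.Finite R Aᵐᵒᵖ :=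
      Module.Finite.equiv (MulOpposite.opLinearEquiv R (M := A))
    haveI : Module.Projective R Aᵐᵒᵖ :=
      Module.Projective.of_equiv (MulOpposite.opLinearEquiv R (M := A))
    haveI hsub := ExtVanishingAux.extOmegaLeft R Aᵐᵒᵖ i hi
    let e : ModuleCat.of Aᵐᵒᵖ (OmegaRight R A) ≅ ModuleCat.of Aᵐᵒᵖ (OmegaLeft R Aᵐᵒᵖ) :=
      (ExtVanishingAux.omegaRightEquiv R A).toModuleIso
    let F := Ext ℤ (ModuleCat.{0} Aᵐᵒᵖ) i
    have iso : extGrp Aᵐᵒᵖ (ModuleCat.of Aᵐᵒᵖ (OmegaRight R A))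
          (ModuleCat.of Aᵐᵒᵖ (OmegaRight R A)) i
        ≅ extGrp Aᵐᵒᵖ (ModuleCat.of Aᵐᵒᵖ (OmegaLeft R Aᵐᵒᵖ))
          (ModuleCat.of Aᵐᵒᵖ (OmegaLeft R Aᵐᵒᵖ)) i :=
      ((F.obj (Opposite.op (ModuleCat.of Aᵐᵒᵖ (OmegaRight R A)))).mapIso e).trans
        ((F.mapIso (Iso.op e)).app (ModuleCat.of Aᵐᵒᵖ (OmegaLeft R Aᵐᵒᵖ))).symm
    exact Equiv.subsingleton (ExtVanishingAux.modIsoEquiv iso)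

end
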